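/- Reparametrization invariance of the signature: Let x : ℝ → ℝ^d be a continuously differentiable path and let φ : ℝ → ℝ be continuously differentiable. Then for every word (i_1, …, i_k) ∈ {1, …, d}^k and all real numbers s', t', the composed path x ∘ φ satisfies S_{(i_1, …, i_k)}(x ∘ φ)_{[s',t']} = S_{(i_1, …, i_k)}(x)_{[φ(s'), φ(t')]}. In particular, if φ(s') = s and φ(t') = t, the coordinate signature of x ∘ φ on [s',t'] equals that of x on [s,t], so the signature disregards the parameterization of the path. -/

import Mathlib

open intervalIntegral Topology Filter

/-- Coordinate signature, recursing on the *reversed* word: the head of the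
list is the last letter `i_k` of the word. -/
noncomputable def sigRev {d : ℕ} (x : ℝ → Fin d → ℝ) (s : ℝ) : List (Fin d) → ℝ → ℝ
  | [], _ => 1
  | i :: w, t => ∫ u in s..t, sigRev x s w u * deriv (fun v => x v i) u


lemma contDiff_comp_coord {d : ℕ} (x : ℝ → Fin d → ℝ) (hx : ContDiff ℝ 1 x) (i : Fin d) :
    ContDiff ℝ 1 (fun v => x v i) :=
  (ContinuousLinearMap.proj (R := ℝ) (φ := fun _ : Fin d => ℝ) i).contDiff.comp hx

lemma sigRev_continuous {d : ℕ} (x : ℝ → Fin d → ℝ) (hx : ContDiff ℝ 1 x) (s : ℝ)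
    (w : List (Fin d)) : Continuous (sigRev x s w) := by
  induction w with
  | nil => exact continuous_const
  | cons i w ih =>
    have hf : Continuous (fun u => sigRev x s w u * deriv (fun v => x v i) u) :=
      ih.mul ((contDiff_comp_coord x hx i).continuous_deriv le_rfl)
    exact intervalIntegral.continuous_primitive (fun a b => hf.intervalIntegrable a b) s

lemma sigRev_reparam {d : ℕ} (x : ℝ → Fin d → ℝ) (hx : ContDiff ℝ 1 x)
    (φ : ℝ → ℝ) (hφ : ContDiff ℝ 1 φ) (w : List (Fin d)) (s' : ℝ) :
    ∀ t', sigRev (x ∘ φ) s' w t' = sigRev x (φ s') w (φ t') := by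
  induction w with
  | nil => intro t'; rfl
  | cons i w ih =>
    intro t'
    have hg : ContDiff ℝ 1 (fun v => x v i) := contDiff_comp_coord x hx i
    have hderiv : ∀ u, deriv (fun v => (x ∘ φ) v i) u
        = deriv (fun v => x v i) (φ u) * deriv φ u := by
      intro u
      have h1 : HasDerivAt (fun v => x v i) (deriv (fun v => x v i) (φ u)) (φ u) :=
        ((hg.differentiable one_ne_zero) (φ u)).hasDerivAt
      have h2 : HasDerivAt φ (deriv φ u) u := ((hφ.differentiable one_ne_zero) u).hasDerivAt
      exact (h1.comp u h2).deriv
    have hG : Continuous (fun u => sigRev x (φ s') w u * deriv (fun v => x v i) u) :=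
      (sigRev_continuous x hx (φ s') w).mul (hg.continuous_deriv le_rfl)
    show (∫ u in s'..t', sigRev (x ∘ φ) s' w u * deriv (fun v => (x ∘ φ) v i) u)
        = ∫ u in φ s'..φ t', sigRev x (φ s') w u * deriv (fun v => x v i) u
    rw [← intervalIntegral.integral_comp_smul_deriv
      (f := φ) (f' := deriv φ)
      (g := fun u => sigRev x (φ s') w u * deriv (fun v => x v i) u)
      (fun u _ => ((hφ.differentiable one_ne_zero) u).hasDerivAt)
      ((hφ.continuous_deriv le_rfl).continuousOn) hG]
    congr 1
    ext u
    rw [ih u, hderiv u]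
    simp [Function.comp]
    ring

/-- Coordinate signature `S_{(i_1,…,i_k)}(x)_{[s,t]}` of a path `x : ℝ → ℝ^d`,
defined by `S_{()} = 1` and
`S_{(i_1,…,i_k)}(x)_{[s,t]} = ∫_s^t S_{(i_1,…,i_{k-1})}(x)_{[s,u]} · x_{i_k}'(u) du`. -/
noncomputable def sig {d : ℕ} (x : ℝ → Fin d → ℝ) (s t : ℝ) (w : List (Fin d)) : ℝ :=
  sigRev x s w.reverse t

/-- Reparametrization invariance of the signature:
`S_w(x ∘ φ)_{[s',t']} = S_w(x)_{[φ(s'),φ(t')]}`. -/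
theorem sig_reparam {d : ℕ} (x : ℝ → Fin d → ℝ) (hx : ContDiff ℝ 1 x)
    (φ : ℝ → ℝ) (hφ : ContDiff ℝ 1 φ) (w : List (Fin d)) (s' t' : ℝ) :
    sig (x ∘ φ) s' t' w = sig x (φ s') (φ t') w := by
  unfold sig
  exact sigRev_reparam x hx φ hφ w.reverse s' t'
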